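/- Let N ≥ 1, let M be a real N × N matrix such that |uᵀ M ρ| ≤ 1/3 for all vectors u, ρ ∈ ℝ^N with ‖u‖ ≤ 1 and ‖ρ‖ ≤ 1 (Euclidean norm), and let d ≥ 1 be a natural number with 2N ≤ 4^d. Then Tr((MᵀM)^d) ≤ (1/2) · (2/3)^(2d). -/

import Mathlib

open scoped Matrix.Norms.L2Operator

namespace SoundnessAux

open Matrix

variable {N : ℕ}

lemma conjT_eq_transpose (M : Matrix (Fin N) (Fin N) ℝ) : Mᴴ = Mᵀ := by
  ext i j; simp [conjTranspose_apply]

lemma inner_eq (u y : EuclideanSpace ℝ (Fin N)) :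
    inner ℝ u y = ∑ i, u i * y i := by
  simp [PiLp.inner_apply, mul_comm]

lemma mulVec_norm_le (M : Matrix (Fin N) (Fin N) ℝ)
    (h : ∀ u ρ : EuclideanSpace ℝ (Fin N), ‖u‖ ≤ 1 → ‖ρ‖ ≤ 1 →
      |∑ i, ∑ j, u i * M i j * ρ j| ≤ 1 / 3)
    (ρ : EuclideanSpace ℝ (Fin N)) (hρ : ‖ρ‖ ≤ 1) :
    ‖((EuclideanSpace.equiv (Fin N) ℝ).symm (M *ᵥ ρ) : EuclideanSpace ℝ (Fin N))‖ ≤ 1 / 3 := by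
  set y : EuclideanSpace ℝ (Fin N) := (EuclideanSpace.equiv (Fin N) ℝ).symm (M *ᵥ ρ) with hy
  rcases eq_or_ne y 0 with h0 | h0
  · rw [h0, norm_zero]; norm_num
  · set u : EuclideanSpace ℝ (Fin N) := ‖y‖⁻¹ • y with hu
    have hnormy : (0:ℝ) < ‖y‖ := norm_pos_iff.mpr h0
    have hu1 : ‖u‖ ≤ 1 := by
      rw [hu, norm_smul, norm_inv, norm_norm, inv_mul_cancel₀ hnormy.ne']
    have key := h u ρ hu1 hρ
    have hsum : ∑ i, ∑ j, u i * M i j * ρ j = ‖y‖ := by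
      have : ∑ i, ∑ j, u i * M i j * ρ j = ∑ i, u i * y i := by
        apply Finset.sum_congr rfl
        intro i _
        have hyi : y i = ∑ j, M i j * ρ j := rfl
        rw [hyi, Finset.mul_sum]
        apply Finset.sum_congr rfl
        intro j _
        ring
      rw [this, ← inner_eq u y, hu, inner_smul_left, real_inner_self_eq_norm_sq]
      simp only [starRingEnd_apply, star_inv₀, star_trivial]
      field_simp
    rw [hsum] at key
    calc ‖y‖ ≤ |‖y‖| := le_abs_self _
    _ ≤ 1/3 := key

lemma opNorm_le (M : Matrix (Fin N) (Fin N) ℝ)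
    (h : ∀ u ρ : EuclideanSpace ℝ (Fin N), ‖u‖ ≤ 1 → ‖ρ‖ ≤ 1 →
      |∑ i, ∑ j, u i * M i j * ρ j| ≤ 1 / 3) :
    ‖M‖ ≤ 1 / 3 := by
  rw [Matrix.l2_opNorm_def]
  apply ContinuousLinearMap.opNorm_le_bound _ (by norm_num)
  intro x
  rcases eq_or_ne x 0 with h0 | h0
  · simp [h0]
  · have hx : (0:ℝ) < ‖x‖ := norm_pos_iff.mpr h0
    have h1 : ‖(‖x‖⁻¹ • x : EuclideanSpace ℝ (Fin N))‖ ≤ 1 := by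
      rw [norm_smul, norm_inv, norm_norm, inv_mul_cancel₀ hx.ne']
    have := mulVec_norm_le M h (‖x‖⁻¹ • x) h1
    have heq : ((EuclideanSpace.equiv (Fin N) ℝ).symm
        (M *ᵥ (‖x‖⁻¹ • x : EuclideanSpace ℝ (Fin N))) : EuclideanSpace ℝ (Fin N))
        = ‖x‖⁻¹ • ((EuclideanSpace.equiv (Fin N) ℝ).symm (M *ᵥ x)) := by
      ext i
      show (M *ᵥ (‖x‖⁻¹ • x)) i = ‖x‖⁻¹ * (M *ᵥ x) i
      simp only [Matrix.mulVec, dotProduct, Finset.mul_sum]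
      apply Finset.sum_congr rfl
      intro j _
      have : (‖x‖⁻¹ • x.ofLp) j = ‖x‖⁻¹ * x j := rfl
      rw [this]
      ring
    rw [heq, norm_smul, norm_inv, norm_norm] at this
    have h2 : ‖((EuclideanSpace.equiv (Fin N) ℝ).symm (M *ᵥ x) : EuclideanSpace ℝ (Fin N))‖
        ≤ 1/3 * ‖x‖ := by
      rw [inv_mul_le_iff₀ hx] at this
      linarith [this]
    calc ‖(LinearEquiv.trans Matrix.toEuclideanLin LinearMap.toContinuousLinearMap M) x‖
        = ‖((EuclideanSpace.equiv (Fin N) ℝ).symm (M *ᵥ x) : EuclideanSpace ℝ (Fin N))‖ := by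
          congr 1
      _ ≤ 1/3 * ‖x‖ := h2

lemma coord_le_norm (v : EuclideanSpace ℝ (Fin N)) (i : Fin N) : ‖v i‖ ≤ ‖v‖ := by
  rw [EuclideanSpace.norm_eq]
  have h1 : ‖v i‖ = Real.sqrt (‖v i‖ ^ 2) := (Real.sqrt_sq (norm_nonneg _)).symm
  rw [h1]
  apply Real.sqrt_le_sqrt
  exact Finset.single_le_sum (f := fun j => ‖v j‖ ^ 2) (fun j _ => sq_nonneg _) (Finset.mem_univ i)

lemma entry_le_norm (A : Matrix (Fin N) (Fin N) ℝ) (i j : Fin N) :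
    |A i j| ≤ ‖A‖ := by
  have hb : ‖(EuclideanSpace.single j (1:ℝ) : EuclideanSpace ℝ (Fin N))‖ = 1 := by
    simp
  have h1 := Matrix.l2_opNorm_mulVec A (EuclideanSpace.single j (1:ℝ))
  rw [hb, mul_one] at h1
  have h2 : ((EuclideanSpace.equiv (Fin N) ℝ).symm
      (A *ᵥ (EuclideanSpace.single j (1:ℝ))) : EuclideanSpace ℝ (Fin N)) i = A i j := by
    simp [Matrix.mulVec, dotProduct, EuclideanSpace.single_apply]
  calc |A i j| = ‖((EuclideanSpace.equiv (Fin N) ℝ).symm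
        (A *ᵥ (EuclideanSpace.single j (1:ℝ))) : EuclideanSpace ℝ (Fin N)) i‖ := by
        rw [h2]; simp
    _ ≤ ‖((EuclideanSpace.equiv (Fin N) ℝ).symm
        (A *ᵥ (EuclideanSpace.single j (1:ℝ))) : EuclideanSpace ℝ (Fin N))‖ :=
        SoundnessAux.coord_le_norm _ i
    _ ≤ ‖A‖ := h1

end SoundnessAux

open Matrix in
theorem soundness_trace_upper_bound
    (N : ℕ) (hN : 1 ≤ N) (M : Matrix (Fin N) (Fin N) ℝ)
    (h : ∀ u ρ : EuclideanSpace ℝ (Fin N), ‖u‖ ≤ 1 → ‖ρ‖ ≤ 1 →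
      |∑ i, ∑ j, u i * M i j * ρ j| ≤ 1 / 3)
    (d : ℕ) (hd : 1 ≤ d) (hNd : 2 * N ≤ 4 ^ d) :
    ((Mᵀ * M) ^ d).trace ≤ (1 / 2) * ((2 : ℝ) / 3) ^ (2 * d) := by
  have hM : ‖M‖ ≤ 1/3 := SoundnessAux.opNorm_le M h
  have hMnn : (0:ℝ) ≤ ‖M‖ := norm_nonneg _
  have hA : ‖Mᵀ * M‖ ≤ 1/9 := by
    rw [← SoundnessAux.conjT_eq_transpose, Matrix.l2_opNorm_conjTranspose_mul_self]
    nlinarith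
  have hAd : ‖(Mᵀ * M) ^ d‖ ≤ (1/9 : ℝ) ^ d := by
    calc ‖(Mᵀ * M) ^ d‖ ≤ ‖Mᵀ * M‖ ^ d := norm_pow_le' _ hd
      _ ≤ (1/9:ℝ)^d := pow_le_pow_left₀ (norm_nonneg _) hA d
  have htr : ((Mᵀ * M) ^ d).trace ≤ (N : ℝ) * (1/9)^d := by
    rw [Matrix.trace]
    calc ∑ i, ((Mᵀ * M) ^ d).diag i ≤ ∑ _i : Fin N, (1/9:ℝ)^d := by
          apply Finset.sum_le_sum
          intro i _
          calc ((Mᵀ * M) ^ d).diag i ≤ |((Mᵀ * M) ^ d) i i| := le_abs_self _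
            _ ≤ ‖(Mᵀ * M) ^ d‖ := SoundnessAux.entry_le_norm _ i i
            _ ≤ (1/9:ℝ)^d := hAd
      _ = (N : ℝ) * (1/9)^d := by simp [Finset.sum_const, mul_comm]
  calc ((Mᵀ * M) ^ d).trace ≤ (N : ℝ) * (1/9)^d := htr
    _ ≤ (1/2) * ((2:ℝ)/3)^(2*d) := by
        have hNd' : (2:ℝ) * N ≤ 4 ^ d := by
          have := hNd
          calc (2:ℝ) * N = ((2 * N : ℕ) : ℝ) := by push_cast; ring
            _ ≤ ((4^d : ℕ) : ℝ) := by exact_mod_cast hNd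
            _ = (4:ℝ)^d := by push_cast; ring
        have h9 : (0:ℝ) < (9:ℝ)^d := by positivity
        rw [pow_mul]
        have h23 : ((2:ℝ)/3)^2 = 4/9 := by norm_num
        rw [h23]
        have e1 : (N:ℝ) * ((1:ℝ)/9)^d = N / 9^d := by
          rw [div_pow, one_pow]; ring
        have e2 : (1:ℝ)/2 * ((4:ℝ)/9)^d = 4^d/(2*9^d) := by
          rw [div_pow]; ring
        rw [e1, e2, div_le_div_iff₀ h9 (by positivity)]
        nlinarith [h9, hNd']
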